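/- Let 1 ≤ l ≤ n, L = 2(n−l), and let f̄ : ℝ^{l+L} → ℝⁿ be continuously differentiable. Define f : ℝⁿ → ℝⁿ by f(x) = f̄(x₁,…,x_l, sin x_{l+1}, cos x_{l+1},…, sin x_n, cos x_n). Let b̄_{ij} : ℝ^{l+L} → ℝ be continuous for i = 1,…,s, j = 1,…,r_i and define b_{ij}(x) = b̄_{ij}(x₁,…,x_l, sin x_{l+1}, cos x_{l+1},…, sin x_n, cos x_n), and C = ⋃_{i=1}^{s} ⋂_{j=1}^{r_i} {x : b_{ij}(x) ≥ 0}. Consider the extended system on ℝ^{l+L} with state (x̂, ŵ): dx̂_i/dt = f̄_i(x̂,ŵ) for i = 1,…,l, dŵ_{2k−1}/dt = ŵ_{2k} f̄_{l+k}(x̂,ŵ) and dŵ_{2k}/dt = −ŵ_{2k−1} f̄_{l+k}(x̂,ŵ) for k = 1,…,n−l, and define Ĉ = (⋃_{i=1}^{s} ⋂_{j=1}^{r_i} {(x̂,ŵ) : b̄_{ij}(x̂,ŵ) ≥ 0}) ∩ ⋂_{k=1}^{n−l} {(x̂,ŵ) : ŵ_{2k−1}² + ŵ_{2k}² = 1}.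 Then C is positive invariant for ẋ = f(x) if and only if Ĉ is positive invariant for the extended system. -/

import Mathlib

/-- `D` is positive invariant for `ẋ = F(x)`: every solution defined on `[0, t]`
that starts in `D` stays in `D`. -/
def PosInvariant {E : Type*} [NormedAddCommGroup E] [NormedSpace ℝ E]
    (F : E → E) (D : Set E) : Prop :=
  ∀ (x : ℝ → E) (t : ℝ), 0 ≤ t →
    (∀ s ∈ Set.Icc 0 t, HasDerivAt x (F (x s)) s) → x 0 ∈ D → x t ∈ D

/-- The lift `x ↦ (x₁,…,x_l, sin x_{l+1}, …, cos x_n)` of the state, with the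
angular coordinates grouped as `(sines, cosines)`. -/
noncomputable def trigLift {l d : ℕ} (x : (Fin l → ℝ) × (Fin d → ℝ)) :
    (Fin l → ℝ) × (Fin d → ℝ) × (Fin d → ℝ) :=
  (x.1, fun k => Real.sin (x.2 k), fun k => Real.cos (x.2 k))

/-- The extended (polynomialized) vector field on `ℝ^{l+L}`:
`dx̂ᵢ = f̄ᵢ`, `dŵ_{2k−1} = ŵ_{2k} f̄_{l+k}`, `dŵ_{2k} = −ŵ_{2k−1} f̄_{l+k}`. -/
def extField {l d : ℕ}
    (fbar : (Fin l → ℝ) × (Fin d → ℝ) × (Fin d → ℝ) → (Fin l → ℝ) × (Fin d → ℝ)) :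
    (Fin l → ℝ) × (Fin d → ℝ) × (Fin d → ℝ) →
      (Fin l → ℝ) × (Fin d → ℝ) × (Fin d → ℝ) :=
  fun z => ((fbar z).1,
    fun k => z.2.2 k * (fbar z).2 k,
    fun k => -(z.2.1 k * (fbar z).2 k))

private lemma clm_deriv {F G : Type*} [NormedAddCommGroup F] [NormedSpace ℝ F]
    [NormedAddCommGroup G] [NormedSpace ℝ G] (φ : F →L[ℝ] G) {x : ℝ → F} {v : F} {s : ℝ}
    (h : HasDerivAt x v s) : HasDerivAt (fun u => φ (x u)) (φ v) s :=
  φ.hasFDerivAt.comp_hasDerivAt s h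

private lemma const_of_deriv_zero {t : ℝ} {F : ℝ → ℝ}
    (h : ∀ s ∈ Set.Icc 0 t, HasDerivAt F 0 s) :
    ∀ s ∈ Set.Icc 0 t, F s = F 0 :=
  constant_of_has_deriv_right_zero
    (fun s hs => (h s hs).continuousAt.continuousWithinAt)
    (fun s hs => (h s (Set.mem_Icc_of_Ico hs)).hasDerivWithinAt)

private lemma exists_angle {a b : ℝ} (h : a ^ 2 + b ^ 2 = 1) :
    ∃ θ : ℝ, Real.sin θ = a ∧ Real.cos θ = b := by
  have habs : ‖(⟨b, a⟩ : ℂ)‖ = 1 := by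
    rw [Complex.norm_def, Complex.normSq_mk]
    rw [show b * b + a * a = 1 by nlinarith]
    exact Real.sqrt_one
  have hne : (⟨b, a⟩ : ℂ) ≠ 0 := by
    intro h0; rw [h0] at habs; simp at habs
  refine ⟨Complex.arg ⟨b, a⟩, ?_, ?_⟩
  · rw [Complex.sin_arg, habs]; simp
  · rw [Complex.cos_arg hne, habs]; simp

/-- for `f̄` continuously differentiable, `C` is positive invariant for
`ẋ = f(x) = f̄(x₁,…,x_l, sin x_{l+1}, cos x_{l+1}, …)` iff `Ĉ` is positive invariant
for the extended system. -/
theorem trig_invariance_iff {l d s : ℕ} (hl : 1 ≤ l) (r : Fin s → ℕ)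
    (fbar : (Fin l → ℝ) × (Fin d → ℝ) × (Fin d → ℝ) → (Fin l → ℝ) × (Fin d → ℝ))
    (hf : ContDiff ℝ 1 fbar)
    (bbar : (i : Fin s) → Fin (r i) → ((Fin l → ℝ) × (Fin d → ℝ) × (Fin d → ℝ)) → ℝ)
    (hb : ∀ i j, Continuous (bbar i j))
    (Cset : Set ((Fin l → ℝ) × (Fin d → ℝ)))
    (hC : Cset = ⋃ i : Fin s, ⋂ j : Fin (r i), {x | 0 ≤ bbar i j (trigLift x)})
    (Chat : Set ((Fin l → ℝ) × (Fin d → ℝ) × (Fin d → ℝ)))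
    (hChat : Chat =
      (⋃ i : Fin s, ⋂ j : Fin (r i), {z | 0 ≤ bbar i j z}) ∩
        (⋂ k : Fin d, {z | z.2.1 k ^ 2 + z.2.2 k ^ 2 = 1})) :
    PosInvariant (fun x => fbar (trigLift x)) Cset ↔
      PosInvariant (extField fbar) Chat := by
  subst hC; subst hChat
  constructor
  · -- original invariance implies extended invariance
    intro hinv z t ht hz hz0
    obtain ⟨hz0b, hz0circ⟩ := hz0
    rw [Set.mem_iInter] at hz0circ
    -- continuity of z on [0,t]
    have hzc : ContinuousOn z (Set.Icc 0 t) :=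
      fun u hu => ((hz u hu).continuousAt).continuousWithinAt
    -- clamping map
    set p : ℝ → ℝ := fun u => ((Set.projIcc 0 t ht u : Set.Icc (0:ℝ) t) : ℝ) with hp
    have hpc : Continuous p := continuous_subtype_val.comp continuous_projIcc
    have hpm : ∀ u, p u ∈ Set.Icc 0 t := fun u => (Set.projIcc 0 t ht u).2
    have hpid : ∀ u ∈ Set.Icc 0 t, p u = u := by
      intro u hu; simp only [hp, Set.projIcc_of_mem ht hu]
    have hgc : Continuous fun u => fbar (z (p u)) :=
      hf.continuous.comp (hzc.comp_continuous hpc hpm)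
    -- per-component derivative extraction from the extended ODE
    have hw1 : ∀ k, ∀ u ∈ Set.Icc 0 t,
        HasDerivAt (fun v => (z v).2.1 k) ((z u).2.2 k * (fbar (z u)).2 k) u := by
      intro k u hu
      exact clm_deriv ((ContinuousLinearMap.proj k).comp
        ((ContinuousLinearMap.fst ℝ (Fin d → ℝ) (Fin d → ℝ)).comp
          (ContinuousLinearMap.snd ℝ (Fin l → ℝ) ((Fin d → ℝ) × (Fin d → ℝ))))) (hz u hu)
    have hw2 : ∀ k, ∀ u ∈ Set.Icc 0 t,
        HasDerivAt (fun v => (z v).2.2 k) (-((z u).2.1 k * (fbar (z u)).2 k)) u := by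
      intro k u hu
      exact clm_deriv ((ContinuousLinearMap.proj k).comp
        ((ContinuousLinearMap.snd ℝ (Fin d → ℝ) (Fin d → ℝ)).comp
          (ContinuousLinearMap.snd ℝ (Fin l → ℝ) ((Fin d → ℝ) × (Fin d → ℝ))))) (hz u hu)
    -- initial angles
    choose θ0 hθ0s hθ0c using fun k => exists_angle (hz0circ k)
    -- angle functions
    set θ : Fin d → ℝ → ℝ :=
      fun k u => θ0 k + ∫ v in (0:ℝ)..u, (fbar (z (p v))).2 k with hθdef
    have hθd : ∀ k u, HasDerivAt (θ k) ((fbar (z (p u))).2 k) u := by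
      intro k u
      have hgk : Continuous fun v => (fbar (z (p v))).2 k :=
        (continuous_apply k).comp (continuous_snd.comp hgc)
      have := intervalIntegral.integral_hasDerivAt_right
        (hgk.intervalIntegrable 0 u)
        (hgk.stronglyMeasurable.stronglyMeasurableAtFilter)
        hgk.continuousAt
      exact this.const_add (θ0 k)
    have hθ0 : ∀ k, θ k 0 = θ0 k := by
      intro k; simp [hθdef]
    -- the energy functions are constant, so w = (sin θ, cos θ)
    have hkey : ∀ k, ∀ u ∈ Set.Icc 0 t,
        (z u).2.1 k = Real.sin (θ k u) ∧ (z u).2.2 k = Real.cos (θ k u) := by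
      intro k u hu
      set Ek : ℝ → ℝ := fun v =>
        ((z v).2.1 k - Real.sin (θ k v)) ^ 2 + ((z v).2.2 k - Real.cos (θ k v)) ^ 2 with hEk
      have hEconst : ∀ v ∈ Set.Icc 0 t, Ek v = Ek 0 := by
        apply const_of_deriv_zero
        intro v hv
        have hθv : HasDerivAt (θ k) ((fbar (z v)).2 k) v := by
          have := hθd k v; rwa [hpid v hv] at this
        have hsin : HasDerivAt (fun w => Real.sin (θ k w))
            (Real.cos (θ k v) * (fbar (z v)).2 k) v :=
          (Real.hasDerivAt_sin (θ k v)).comp v hθv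
        have hcos : HasDerivAt (fun w => Real.cos (θ k w))
            (-Real.sin (θ k v) * (fbar (z v)).2 k) v :=
          (Real.hasDerivAt_cos (θ k v)).comp v hθv
        have h1 := ((hw1 k v hv).fun_sub hsin).fun_pow 2
        have h2 := ((hw2 k v hv).fun_sub hcos).fun_pow 2
        have h := h1.fun_add h2
        refine h.congr_deriv ?_
        push_cast
        ring
      have hE0 : Ek 0 = 0 := by
        simp [hEk, hθ0 k, hθ0s k, hθ0c k]
      have := hEconst u hu
      rw [hE0] at this
      simp only [hEk] at this
      constructor
      · nlinarith [sq_nonneg ((z u).2.1 k - Real.sin (θ k u)),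
          sq_nonneg ((z u).2.2 k - Real.cos (θ k u))]
      · nlinarith [sq_nonneg ((z u).2.1 k - Real.sin (θ k u)),
          sq_nonneg ((z u).2.2 k - Real.cos (θ k u))]
    -- the reconstructed solution of the original system
    set x : ℝ → (Fin l → ℝ) × (Fin d → ℝ) := fun u => ((z u).1, fun k => θ k u) with hx
    have htrig : ∀ u ∈ Set.Icc 0 t, trigLift (x u) = z u := by
      intro u hu
      have h := fun k => hkey k u hu
      refine Prod.ext rfl (Prod.ext ?_ ?_)
      · funext k; exact ((h k).1).symm
      · funext k; exact ((h k).2).symm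
    have hsol : ∀ u ∈ Set.Icc 0 t,
        HasDerivAt x ((fun y => fbar (trigLift y)) (x u)) u := by
      intro u hu
      have hx1 : HasDerivAt (fun v => (z v).1) ((fbar (z u)).1) u :=
        clm_deriv (ContinuousLinearMap.fst ℝ (Fin l → ℝ) ((Fin d → ℝ) × (Fin d → ℝ))) (hz u hu)
      have hx2 : HasDerivAt (fun v => fun k => θ k v) (fun k => (fbar (z u)).2 k) u := by
        apply hasDerivAt_pi.2
        intro k
        have := hθd k u; rwa [hpid u hu] at this
      have := hx1.prodMk hx2
      simp only [htrig u hu]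
      exact this
    have hx0 : x 0 ∈ ⋃ i : Fin s, ⋂ j : Fin (r i), {y | 0 ≤ bbar i j (trigLift y)} := by
      rw [Set.mem_iUnion] at hz0b ⊢
      obtain ⟨i, hi⟩ := hz0b
      refine ⟨i, ?_⟩
      rw [Set.mem_iInter] at hi ⊢
      intro j
      have h0 : (0:ℝ) ∈ Set.Icc 0 t := ⟨le_refl 0, ht⟩
      simpa [htrig 0 h0] using hi j
    have hxt := hinv x t ht hsol hx0
    have htt : t ∈ Set.Icc 0 t := ⟨ht, le_refl t⟩
    constructor
    · rw [Set.mem_iUnion] at hxt ⊢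
      obtain ⟨i, hi⟩ := hxt
      refine ⟨i, ?_⟩
      rw [Set.mem_iInter] at hi ⊢
      intro j
      have := hi j
      rwa [Set.mem_setOf_eq, htrig t htt] at this
    · rw [Set.mem_iInter]
      intro k
      set Nk : ℝ → ℝ := fun v => (z v).2.1 k ^ 2 + (z v).2.2 k ^ 2 with hNk
      have hNconst : ∀ v ∈ Set.Icc 0 t, Nk v = Nk 0 := by
        apply const_of_deriv_zero
        intro v hv
        have h := ((hw1 k v hv).fun_pow 2).fun_add ((hw2 k v hv).fun_pow 2)
        refine h.congr_deriv ?_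
        push_cast
        ring
      have := hNconst t htt
      simp only [hNk] at this
      rw [Set.mem_setOf_eq, this]
      exact hz0circ k
  · -- extended invariance implies original invariance
    intro hinv x t ht hx hx0
    set z : ℝ → (Fin l → ℝ) × (Fin d → ℝ) × (Fin d → ℝ) := fun u => trigLift (x u) with hzdef
    have hzsol : ∀ u ∈ Set.Icc 0 t, HasDerivAt z (extField fbar (z u)) u := by
      intro u hu
      have hxs := hx u hu
      have hx1 : HasDerivAt (fun v => (x v).1) ((fbar (trigLift (x u))).1) u :=
        clm_deriv (ContinuousLinearMap.fst ℝ (Fin l → ℝ) (Fin d → ℝ)) hxs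
      have hx2 : ∀ k, HasDerivAt (fun v => (x v).2 k) ((fbar (trigLift (x u))).2 k) u :=
        fun k => clm_deriv ((ContinuousLinearMap.proj k).comp
          (ContinuousLinearMap.snd ℝ (Fin l → ℝ) (Fin d → ℝ))) hxs
      refine HasDerivAt.prodMk hx1 (HasDerivAt.prodMk ?_ ?_)
      · apply hasDerivAt_pi.2
        intro k
        have := (Real.hasDerivAt_sin ((x u).2 k)).comp u (hx2 k)
        exact this
      · apply hasDerivAt_pi.2
        intro k
        have := (Real.hasDerivAt_cos ((x u).2 k)).comp u (hx2 k)
        have heq : -Real.sin ((x u).2 k) * (fbar (trigLift (x u))).2 k =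
            -((z u).2.1 k * (fbar (z u)).2 k) := by
          simp [hzdef, trigLift, neg_mul]
        rwa [heq] at this
    have hz0 : z 0 ∈ (⋃ i : Fin s, ⋂ j : Fin (r i), {y | 0 ≤ bbar i j y}) ∩
        (⋂ k : Fin d, {y | y.2.1 k ^ 2 + y.2.2 k ^ 2 = 1}) := by
      constructor
      · rw [Set.mem_iUnion] at hx0 ⊢
        obtain ⟨i, hi⟩ := hx0
        refine ⟨i, ?_⟩
        rw [Set.mem_iInter] at hi ⊢
        exact fun j => hi j
      · rw [Set.mem_iInter]
        intro k
        simp [hzdef, trigLift, Real.sin_sq_add_cos_sq]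
    have hzt := hinv z t ht hzsol hz0
    obtain ⟨hzt1, _⟩ := hzt
    rw [Set.mem_iUnion] at hzt1 ⊢
    obtain ⟨i, hi⟩ := hzt1
    refine ⟨i, ?_⟩
    rw [Set.mem_iInter] at hi ⊢
    exact fun j => hi j
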